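/- For every joint probability distribution P on X_1 × X_2 with marginals P_1, P_2, the conditional mutual information satisfies I_P(X_1;Y_2|X_2) ≤ (P_2(0) − P(0,0))·C_{1,0} + (1 − P_1(0) − P_2(0) + P(0,0))·C_{1,1}. -/

import Mathlib

open Real BigOperators Finset

/-- Entropy of a finite probability vector, with the convention `0 * log 0 = 0`
(automatic since `Real.log 0 = 0`). -/
noncomputable def ent {n : ℕ} (p : Fin n → ℝ) : ℝ := -∑ y, p y * Real.log (p y)

/-- `Q` is a probability distribution on `Fin n`. -/
def IsProbDist {n : ℕ} (Q : Fin n → ℝ) : Prop := (∀ x, 0 ≤ Q x) ∧ ∑ x, Q x = 1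

/-- `P` is a joint probability distribution. -/
def IsJointProbDist {m n : ℕ} (P : Fin m → Fin n → ℝ) : Prop :=
  (∀ x1 x2, 0 ≤ P x1 x2) ∧ ∑ x1, ∑ x2, P x1 x2 = 1

/-- First marginal `P_1`. -/
noncomputable def marg1 {m n : ℕ} (P : Fin m → Fin n → ℝ) (x1 : Fin m) : ℝ := ∑ x2, P x1 x2

/-- Second marginal `P_2`. -/
noncomputable def marg2 {m n : ℕ} (P : Fin m → Fin n → ℝ) (x2 : Fin n) : ℝ := ∑ x1, P x1 x2

/-- Conditional mutual information `I_P(X₁;Y₂|X₂)`; terms with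
`P x1 x2 * W2 x1 x2 y2 = 0` vanish, and summands with `marg2 P x2 = 0` vanish
since then `P x1 x2 = 0`. -/
noncomputable def condMI1 {m n t : ℕ} (P : Fin m → Fin n → ℝ)
    (W2 : Fin m → Fin n → Fin t → ℝ) : ℝ :=
  ∑ x2, ∑ x1, ∑ y2, P x1 x2 * W2 x1 x2 y2 *
    Real.log (W2 x1 x2 y2 / ((∑ x1', P x1' x2 * W2 x1' x2 y2) / marg2 P x2))

/-- Conditional mutual information `I_P(X₂;Y₁|X₁)`. -/
noncomputable def condMI2 {m n t : ℕ} (P : Fin m → Fin n → ℝ)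
    (W1 : Fin m → Fin n → Fin t → ℝ) : ℝ :=
  ∑ x1, ∑ x2, ∑ y1, P x1 x2 * W1 x1 x2 y1 *
    Real.log (W1 x1 x2 y1 / ((∑ x2', P x1 x2' * W1 x1 x2' y1) / marg1 P x1))

/-- Structural assumptions of a generalized push-to-talk two-way channel with
input alphabets `Fin (r1+3)`, `Fin (r2+3)` and output alphabets `Fin (s1+2)`,
`Fin (s2+2)`: both marginal channels are transition matrices; the row of
input `0` of each user is uniform; for each state, the nonzero-input rows are
permutations of the row of input `1` and have constant column sums
(weak symmetry). -/
def GenPTT {r1 r2 s1 s2 : ℕ} (W1 : Fin (r1 + 3) → Fin (r2 + 3) → Fin (s1 + 2) → ℝ)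
    (W2 : Fin (r1 + 3) → Fin (r2 + 3) → Fin (s2 + 2) → ℝ) : Prop :=
  (∀ x1 x2 y1, 0 ≤ W1 x1 x2 y1) ∧ (∀ x1 x2 y2, 0 ≤ W2 x1 x2 y2) ∧
  (∀ x1 x2, ∑ y1, W1 x1 x2 y1 = 1) ∧ (∀ x1 x2, ∑ y2, W2 x1 x2 y2 = 1) ∧
  (∀ x2 y2, W2 0 x2 y2 = 1 / ((s2 : ℝ) + 2)) ∧
  (∀ x2, ∀ x1 : Fin (r1 + 3), x1 ≠ 0 →
    ∃ σ : Equiv.Perm (Fin (s2 + 2)), ∀ y2, W2 x1 x2 y2 = W2 1 x2 (σ y2)) ∧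
  (∀ x2, ∀ y2 y2' : Fin (s2 + 2),
    ∑ x1 ∈ Finset.univ.filter (fun x1 => x1 ≠ (0 : Fin (r1 + 3))), W2 x1 x2 y2 =
    ∑ x1 ∈ Finset.univ.filter (fun x1 => x1 ≠ (0 : Fin (r1 + 3))), W2 x1 x2 y2') ∧
  (∀ x1 y1, W1 x1 0 y1 = 1 / ((s1 : ℝ) + 2)) ∧
  (∀ x1, ∀ x2 : Fin (r2 + 3), x2 ≠ 0 →
    ∃ σ : Equiv.Perm (Fin (s1 + 2)), ∀ y1, W1 x1 x2 y1 = W1 x1 1 (σ y1)) ∧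
  (∀ x1, ∀ y1 y1' : Fin (s1 + 2),
    ∑ x2 ∈ Finset.univ.filter (fun x2 => x2 ≠ (0 : Fin (r2 + 3))), W1 x1 x2 y1 =
    ∑ x2 ∈ Finset.univ.filter (fun x2 => x2 ≠ (0 : Fin (r2 + 3))), W1 x1 x2 y1')

/-- `C_{1,x₂} = log s₂ − H(row of input 1 of Q_{1,x₂})`. -/
noncomputable def C1 {r1 r2 s2 : ℕ} (W2 : Fin (r1 + 3) → Fin (r2 + 3) → Fin (s2 + 2) → ℝ)
    (x2 : Fin (r2 + 3)) : ℝ := Real.log ((s2 : ℝ) + 2) - ent (fun y2 => W2 1 x2 y2)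

/-- `C_{2,x₁} = log s₁ − H(row of input 1 of Q_{2,x₁})`. -/
noncomputable def C2 {r1 r2 s1 : ℕ} (W1 : Fin (r1 + 3) → Fin (r2 + 3) → Fin (s1 + 2) → ℝ)
    (x1 : Fin (r1 + 3)) : ℝ := Real.log ((s1 : ℝ) + 2) - ent (fun y1 => W1 x1 1 y1)

/-- The channel symmetry property: `C_{1,x₂} = C_{1,1}` for all `x₂ ≠ 0` and
`C_{2,x₁} = C_{2,1}` for all `x₁ ≠ 0`. -/
def SymProp {r1 r2 s1 s2 : ℕ} (W1 : Fin (r1 + 3) → Fin (r2 + 3) → Fin (s1 + 2) → ℝ)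
    (W2 : Fin (r1 + 3) → Fin (r2 + 3) → Fin (s2 + 2) → ℝ) : Prop :=
  (∀ x2 : Fin (r2 + 3), x2 ≠ 0 → C1 W2 x2 = C1 W2 1) ∧
  (∀ x1 : Fin (r1 + 3), x1 ≠ 0 → C2 W1 x1 = C2 W1 1)

section Aux

lemma gibbs_term {t : ℕ} (Q : Fin (t+2) → ℝ) (hQ : ∀ y, 0 ≤ Q y) (y : Fin (t+2)) :
    Q y * Real.log (∑ z, Q z) - Q y * Real.log (Q y) - Q y * Real.log ((t:ℝ)+2)
      ≤ (∑ z, Q z) / ((t:ℝ)+2) - Q y := by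
  have ht : (0:ℝ) < (t:ℝ)+2 := by positivity
  have hM0 : 0 ≤ ∑ z, Q z := Finset.sum_nonneg fun z _ => hQ z
  by_cases hy : Q y = 0
  · simp only [hy, zero_mul, sub_zero, zero_sub, neg_zero, sub_self]
    positivity
  · have hQy : 0 < Q y := lt_of_le_of_ne (hQ y) (Ne.symm hy)
    have hMQ : Q y ≤ ∑ z, Q z := Finset.single_le_sum (fun z _ => hQ z) (Finset.mem_univ y)
    have hM : 0 < ∑ z, Q z := lt_of_lt_of_le hQy hMQ
    have h1 := Real.log_le_sub_one_of_pos
      (show 0 < (∑ z, Q z) / (Q y * ((t:ℝ)+2)) by positivity)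
    rw [Real.log_div hM.ne' (by positivity), Real.log_mul hQy.ne' ht.ne'] at h1
    have h2 : Q y * (Real.log (∑ z, Q z) - (Real.log (Q y) + Real.log ((t:ℝ)+2)))
        ≤ Q y * ((∑ z, Q z) / (Q y * ((t:ℝ)+2)) - 1) :=
      mul_le_mul_of_nonneg_left (by linarith) hQy.le
    have h3 : Q y * ((∑ z, Q z) / (Q y * ((t:ℝ)+2)) - 1) = (∑ z, Q z) / ((t:ℝ)+2) - Q y := by
      field_simp
    rw [h3] at h2
    nlinarith [h2]

lemma gibbs_bound {t : ℕ} (Q : Fin (t+2) → ℝ) (hQ : ∀ y, 0 ≤ Q y) :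
    (∑ y, Q y) * Real.log (∑ y, Q y) - ∑ y, Q y * Real.log (Q y)
      ≤ (∑ y, Q y) * Real.log ((t:ℝ)+2) := by
  have ht : (0:ℝ) < (t:ℝ)+2 := by positivity
  have h : ∑ y, (Q y * Real.log (∑ z, Q z) - Q y * Real.log (Q y) - Q y * Real.log ((t:ℝ)+2))
      ≤ ∑ y : Fin (t+2), ((∑ z, Q z) / ((t:ℝ)+2) - Q y) :=
    Finset.sum_le_sum fun y _ => gibbs_term Q hQ y
  have e1 : ∑ y : Fin (t+2), ((∑ z, Q z) / ((t:ℝ)+2) - Q y) = 0 := by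
    rw [Finset.sum_sub_distrib, Finset.sum_const, Finset.card_univ, Fintype.card_fin,
      nsmul_eq_mul]
    push_cast
    field_simp
    ring
  have eA : ∑ y, Q y * Real.log (∑ z, Q z) = (∑ y, Q y) * Real.log (∑ z, Q z) :=
    (Finset.sum_mul _ _ _).symm
  have eC : ∑ y, Q y * Real.log ((t:ℝ)+2) = (∑ y, Q y) * Real.log ((t:ℝ)+2) :=
    (Finset.sum_mul _ _ _).symm
  rw [Finset.sum_sub_distrib, Finset.sum_sub_distrib, eA, eC] at h
  linarith

lemma inner_bound {r1 r2 s2 : ℕ}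
    (W2 : Fin (r1 + 3) → Fin (r2 + 3) → Fin (s2 + 2) → ℝ)
    (hWnn : ∀ x1 x2 y2, 0 ≤ W2 x1 x2 y2)
    (hWrow : ∀ x1 x2, ∑ y2, W2 x1 x2 y2 = 1)
    (hW0 : ∀ x2 y2, W2 0 x2 y2 = 1 / ((s2 : ℝ) + 2))
    (hWperm : ∀ x2, ∀ x1 : Fin (r1 + 3), x1 ≠ 0 →
      ∃ σ : Equiv.Perm (Fin (s2 + 2)), ∀ y2, W2 x1 x2 y2 = W2 1 x2 (σ y2))
    (P : Fin (r1 + 3) → Fin (r2 + 3) → ℝ) (hPnn : ∀ x1 x2, 0 ≤ P x1 x2)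
    (x2 : Fin (r2 + 3)) :
    ∑ x1, ∑ y2, P x1 x2 * W2 x1 x2 y2 *
      Real.log (W2 x1 x2 y2 / ((∑ x1', P x1' x2 * W2 x1' x2 y2) / marg2 P x2))
      ≤ (marg2 P x2 - P 0 x2) * C1 W2 x2 := by
  have hs : (0:ℝ) < (s2:ℝ) + 2 := by positivity
  have hQnn : ∀ y, 0 ≤ ∑ x1', P x1' x2 * W2 x1' x2 y := fun y =>
    Finset.sum_nonneg fun x1' _ => mul_nonneg (hPnn _ _) (hWnn _ _ _)
  -- split each log term
  have hsplit : ∀ x1 y, P x1 x2 * W2 x1 x2 y *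
      Real.log (W2 x1 x2 y / ((∑ x1', P x1' x2 * W2 x1' x2 y) / marg2 P x2))
      = P x1 x2 * W2 x1 x2 y * Real.log (W2 x1 x2 y)
        - P x1 x2 * W2 x1 x2 y * Real.log (∑ x1', P x1' x2 * W2 x1' x2 y)
        + P x1 x2 * W2 x1 x2 y * Real.log (marg2 P x2) := by
    intro x1 y
    by_cases h : P x1 x2 * W2 x1 x2 y = 0
    · rw [h]; ring
    · have hp : 0 < P x1 x2 :=
        lt_of_le_of_ne (hPnn _ _) (fun e => h (by rw [← e, zero_mul]))
      have hw : 0 < W2 x1 x2 y :=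
        lt_of_le_of_ne (hWnn _ _ _) (fun e => h (by rw [← e, mul_zero]))
      have hQ : 0 < ∑ x1', P x1' x2 * W2 x1' x2 y :=
        lt_of_lt_of_le (mul_pos hp hw)
          (Finset.single_le_sum (f := fun x1' => P x1' x2 * W2 x1' x2 y)
            (fun i _ => mul_nonneg (hPnn _ _) (hWnn _ _ _)) (Finset.mem_univ x1))
      have hM : 0 < marg2 P x2 :=
        lt_of_lt_of_le hp
          (Finset.single_le_sum (fun i _ => hPnn i x2) (Finset.mem_univ x1))
      rw [Real.log_div hw.ne' (by positivity), Real.log_div hQ.ne' hM.ne']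
      ring
  simp only [hsplit, Finset.sum_add_distrib, Finset.sum_sub_distrib]
  -- the three pieces
  have hC : ∑ x1, ∑ y, P x1 x2 * W2 x1 x2 y * Real.log (marg2 P x2)
      = marg2 P x2 * Real.log (marg2 P x2) := by
    have h1 : ∀ x1, ∑ y, P x1 x2 * W2 x1 x2 y * Real.log (marg2 P x2)
        = P x1 x2 * Real.log (marg2 P x2) := by
      intro x1
      have : ∑ y, P x1 x2 * W2 x1 x2 y * Real.log (marg2 P x2)
          = (P x1 x2 * Real.log (marg2 P x2)) * ∑ y, W2 x1 x2 y := by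
        rw [Finset.mul_sum]
        exact Finset.sum_congr rfl fun y _ => by ring
      rw [this, hWrow, mul_one]
    simp only [h1]
    rw [← Finset.sum_mul]
    rfl
  have hB : ∑ x1, ∑ y, P x1 x2 * W2 x1 x2 y * Real.log (∑ x1', P x1' x2 * W2 x1' x2 y)
      = ∑ y, (∑ x1', P x1' x2 * W2 x1' x2 y) *
          Real.log (∑ x1', P x1' x2 * W2 x1' x2 y) := by
    rw [Finset.sum_comm]
    exact Finset.sum_congr rfl fun y _ => (Finset.sum_mul _ _ _).symm
  have hQsum : ∑ y, ∑ x1', P x1' x2 * W2 x1' x2 y = marg2 P x2 := by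
    rw [Finset.sum_comm]
    have h1 : ∀ x1, ∑ y, P x1 x2 * W2 x1 x2 y = P x1 x2 := by
      intro x1
      rw [← Finset.mul_sum, hWrow, mul_one]
    simp only [h1]
    rfl
  -- the entropy piece
  have e0 : ∑ y, W2 0 x2 y * Real.log (W2 0 x2 y) = -Real.log ((s2:ℝ)+2) := by
    simp only [hW0]
    rw [Finset.sum_const, Finset.card_univ, Fintype.card_fin, nsmul_eq_mul, one_div,
      Real.log_inv]
    push_cast
    field_simp
  have erow : ∀ x1 : Fin (r1+3), x1 ≠ 0 →
      ∑ y, W2 x1 x2 y * Real.log (W2 x1 x2 y)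
        = ∑ y, W2 1 x2 y * Real.log (W2 1 x2 y) := by
    intro x1 hx1
    obtain ⟨σ, hσ⟩ := hWperm x2 x1 hx1
    simp only [hσ]
    exact Equiv.sum_comp σ (fun y => W2 1 x2 y * Real.log (W2 1 x2 y))
  have hA : ∑ x1, ∑ y, P x1 x2 * W2 x1 x2 y * Real.log (W2 x1 x2 y)
      = P 0 x2 * (-Real.log ((s2:ℝ)+2))
        + (∑ x1 ∈ Finset.univ.erase 0, P x1 x2) *
          (∑ y, W2 1 x2 y * Real.log (W2 1 x2 y)) := by
    have h1 : ∀ x1, ∑ y, P x1 x2 * W2 x1 x2 y * Real.log (W2 x1 x2 y)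
        = P x1 x2 * ∑ y, W2 x1 x2 y * Real.log (W2 x1 x2 y) := by
      intro x1
      rw [Finset.mul_sum]
      exact Finset.sum_congr rfl fun y _ => by ring
    simp only [h1]
    rw [← Finset.add_sum_erase _ _ (Finset.mem_univ (0 : Fin (r1+3))), e0,
      Finset.sum_mul]
    congr 1
    exact Finset.sum_congr rfl fun x1 hx1 => by
      rw [erow x1 (Finset.ne_of_mem_erase hx1)]
  have hrest : ∑ x1 ∈ Finset.univ.erase 0, P x1 x2 = marg2 P x2 - P 0 x2 := by
    have := Finset.add_sum_erase Finset.univ (fun x1 => P x1 x2)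
      (Finset.mem_univ (0 : Fin (r1+3)))
    have hm : marg2 P x2 = ∑ x1, P x1 x2 := rfl
    linarith [this]
  have hgibbs := gibbs_bound (t := s2) (fun y => ∑ x1', P x1' x2 * W2 x1' x2 y) hQnn
  rw [hQsum] at hgibbs
  rw [hA, hB, hC, hrest]
  have hC1 : C1 W2 x2 = Real.log ((s2:ℝ)+2) + ∑ y, W2 1 x2 y * Real.log (W2 1 x2 y) := by
    unfold C1 ent
    ring
  rw [hC1]
  have hP0M : P 0 x2 ≤ marg2 P x2 :=
    Finset.single_le_sum (fun i _ => hPnn i x2) (Finset.mem_univ (0 : Fin (r1+3)))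
  nlinarith [hgibbs]

end Aux

/-- Upper bound on `I_P(X₁;Y₂|X₂)` via the symmetry property. -/
theorem stmt9 (r1 r2 s1 s2 : ℕ)
    (W1 : Fin (r1 + 3) → Fin (r2 + 3) → Fin (s1 + 2) → ℝ)
    (W2 : Fin (r1 + 3) → Fin (r2 + 3) → Fin (s2 + 2) → ℝ)
    (hW : GenPTT W1 W2) (hSym : SymProp W1 W2)
    (P : Fin (r1 + 3) → Fin (r2 + 3) → ℝ) (hP : IsJointProbDist P) :
    condMI1 P W2 ≤ (marg2 P 0 - P 0 0) * C1 W2 0 +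
      (1 - marg1 P 0 - marg2 P 0 + P 0 0) * C1 W2 1 := by
  have hbound : ∀ x2, ∑ x1, ∑ y2, P x1 x2 * W2 x1 x2 y2 *
      Real.log (W2 x1 x2 y2 / ((∑ x1', P x1' x2 * W2 x1' x2 y2) / marg2 P x2))
      ≤ (marg2 P x2 - P 0 x2) * C1 W2 x2 := fun x2 =>
    inner_bound W2 hW.2.1 hW.2.2.2.1 hW.2.2.2.2.1 hW.2.2.2.2.2.1 P hP.1 x2
  have h1 : condMI1 P W2 ≤ ∑ x2, (marg2 P x2 - P 0 x2) * C1 W2 x2 :=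
    Finset.sum_le_sum fun x2 _ => hbound x2
  have hm2 : ∑ x2, marg2 P x2 = 1 := by
    unfold marg2
    rw [Finset.sum_comm]
    exact hP.2
  have hm1 : ∑ x2, P 0 x2 = marg1 P 0 := rfl
  have hsplit : ∑ x2, (marg2 P x2 - P 0 x2) * C1 W2 x2
      = (marg2 P 0 - P 0 0) * C1 W2 0 +
        (1 - marg1 P 0 - marg2 P 0 + P 0 0) * C1 W2 1 := by
    rw [← Finset.add_sum_erase _ _ (Finset.mem_univ (0 : Fin (r2+3)))]
    congr 1
    have hc : ∀ x2 ∈ Finset.univ.erase (0 : Fin (r2+3)),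
        (marg2 P x2 - P 0 x2) * C1 W2 x2 = (marg2 P x2 - P 0 x2) * C1 W2 1 :=
      fun x2 hx2 => by rw [hSym.1 x2 (Finset.ne_of_mem_erase hx2)]
    rw [Finset.sum_congr rfl hc, ← Finset.sum_mul]
    congr 1
    have e1 : ∑ x2 ∈ Finset.univ.erase 0, marg2 P x2 = 1 - marg2 P 0 := by
      have h := Finset.add_sum_erase Finset.univ (fun x2 => marg2 P x2)
        (Finset.mem_univ (0 : Fin (r2+3)))
      linarith [h, hm2]
    have e2 : ∑ x2 ∈ Finset.univ.erase 0, P 0 x2 = marg1 P 0 - P 0 0 := by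
      have h := Finset.add_sum_erase Finset.univ (fun x2 => P 0 x2)
        (Finset.mem_univ (0 : Fin (r2+3)))
      linarith [h, hm1.symm ▸ (rfl : marg1 P 0 = marg1 P 0)]
    rw [Finset.sum_sub_distrib, e1, e2]
    ring
  calc condMI1 P W2 ≤ ∑ x2, (marg2 P x2 - P 0 x2) * C1 W2 x2 := h1
    _ = _ := hsplit
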